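/- Let N ≡ 1 (mod p) be primes with p ≥ 5, ν = v_p(N-1), log : (Z/NZ)^× → Z/p^ν Z surjective, and X = {N - kp : 1 ≤ k ≤ N-1}. Then ∑_{x∈X} x·log(x) ≡ 0 (mod p^ν) and ∑_{x∈X} log(x) ≡ 0 (mod p^ν). -/

import Mathlib

open Classical in
/-- The discrete logarithm attached to a homomorphism
`log : (Z/NZ)ˣ → Z/MZ`, extended by `0` to non-units of `Z/NZ`. -/
noncomputable def dlog {N M : ℕ} (log : (ZMod N)ˣ →* Multiplicative (ZMod M))
    (x : ZMod N) : ZMod M :=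
  if h : IsUnit x then Multiplicative.toAdd (log h.unit) else 0

lemma dlog_of_not_isUnit {N M : ℕ} (log : (ZMod N)ˣ →* Multiplicative (ZMod M))
    {x : ZMod N} (h : ¬IsUnit x) : dlog log x = 0 := dif_neg h

lemma dlog_unit {N M : ℕ} (log : (ZMod N)ˣ →* Multiplicative (ZMod M))
    (u : (ZMod N)ˣ) : dlog log (u : ZMod N) = Multiplicative.toAdd (log u) := by
  have h : IsUnit (u : ZMod N) := u.isUnit
  have hu : h.unit = u := Units.ext h.unit_spec
  rw [dlog, dif_pos h, hu]

lemma dlog_one {N M : ℕ} (log : (ZMod N)ˣ →* Multiplicative (ZMod M)) :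
    dlog log (1 : ZMod N) = 0 := by
  have := dlog_unit log 1
  simpa using this

lemma dlog_mul {N M : ℕ} (log : (ZMod N)ˣ →* Multiplicative (ZMod M))
    {x y : ZMod N} (hx : IsUnit x) (hy : IsUnit y) :
    dlog log (x * y) = dlog log x + dlog log y := by
  obtain ⟨u, rfl⟩ := hx
  obtain ⟨v, rfl⟩ := hy
  rw [← Units.val_mul, dlog_unit, dlog_unit, dlog_unit, map_mul, toAdd_mul]

/-- Let `N ≡ 1 (mod p)` be primes with `p ≥ 5`, `ν = v_p(N-1)`,
`log : (Z/NZ)ˣ → Z/p^ν Z` surjective, and `X = {N - kp : 1 ≤ k ≤ N-1}`. Then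
`∑_{x∈X} x·log(x) ≡ 0 (mod p^ν)` and `∑_{x∈X} log(x) ≡ 0 (mod p^ν)`. -/
theorem sum_log_over_X_eq_zero (N p ν : ℕ) (hN : N.Prime) (hp : p.Prime)
    (hN5 : 5 ≤ N) (hp5 : 5 ≤ p) (hdvd : p ∣ N - 1)
    (hν : ν = (N - 1).factorization p)
    (log : (ZMod N)ˣ →* Multiplicative (ZMod (p ^ ν)))
    (hlog : Function.Surjective log) :
    (∑ k ∈ Finset.Icc 1 (N - 1),
        ((((N : ℤ) - (k : ℤ) * p) : ℤ) : ZMod (p ^ ν))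
          * dlog log ((((N : ℤ) - (k : ℤ) * p) : ℤ) : ZMod N) = 0)
    ∧ (∑ k ∈ Finset.Icc 1 (N - 1),
        dlog log ((((N : ℤ) - (k : ℤ) * p) : ℤ) : ZMod N) = 0) := by
  haveI : Fact N.Prime := ⟨hN⟩
  set f : ZMod N → ZMod (p ^ ν) := dlog log with hfdef
  have hN1 : 1 ≤ N := by omega
  have hpν : p ^ ν ∣ N - 1 := hν ▸ Nat.ordProj_dvd (N - 1) p
  -- N ≡ 1 mod p^ν
  have hN1M : ((N - 1 : ℕ) : ZMod (p ^ ν)) = 0 :=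
    (ZMod.natCast_eq_zero_iff _ _).mpr hpν
  have hNM : ((N : ℕ) : ZMod (p ^ ν)) = 1 := by
    rw [Nat.cast_sub hN1] at hN1M
    push_cast at hN1M ⊢
    linear_combination hN1M
  -- 2 is invertible mod p^ν
  have hcop2 : Nat.Coprime 2 (p ^ ν) :=
    Nat.Coprime.pow_right ν ((Nat.coprime_primes Nat.prime_two hp).mpr (by omega))
  have h2u : IsUnit (2 : ZMod (p ^ ν)) := by
    have := (ZMod.isUnit_iff_coprime 2 (p ^ ν)).mpr hcop2
    simpa using this
  have htwo : ∀ a : ZMod (p ^ ν), a + a = 0 → a = 0 := by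
    intro a ha
    have h : (2 : ZMod (p ^ ν)) * a = 2 * 0 := by rw [two_mul, ha, mul_zero]
    exact h2u.mul_left_cancel h
  -- f(-1) = 0
  have hfneg1 : f (-1 : ZMod N) = 0 := by
    apply htwo
    have : f ((-1 : ZMod N) * (-1)) = f (-1) + f (-1) :=
      dlog_mul log isUnit_one.neg isUnit_one.neg
    rw [neg_mul_neg, one_mul, hfdef, dlog_one] at this
    exact this.symm
  -- f x⁻¹ = - f x
  have hfinv : ∀ x : ZMod N, f x⁻¹ = -f x := by
    intro x
    rcases eq_or_ne x 0 with rfl | hx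
    · rw [inv_zero, hfdef, dlog_of_not_isUnit log not_isUnit_zero, neg_zero]
    · have hu : IsUnit x := isUnit_iff_ne_zero.mpr hx
      obtain ⟨u, rfl⟩ := hu
      rw [← Units.val_inv_eq_inv_val, hfdef, dlog_unit, dlog_unit, map_inv, toAdd_inv]
  -- sum over all of ZMod N is zero
  have hsum_univ : ∑ x : ZMod N, f x = 0 := by
    apply htwo
    have hbij : Function.Bijective (fun x : ZMod N => x⁻¹) :=
      Function.Involutive.bijective (fun x => inv_inv x)
    have h1 : ∑ x : ZMod N, f x⁻¹ = ∑ x : ZMod N, f x :=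
      Fintype.sum_bijective _ hbij _ _ (fun x => by simp)
    have h2 : ∑ x : ZMod N, f x⁻¹ = -∑ x : ZMod N, f x := by
      rw [← Finset.sum_neg_distrib]
      exact Finset.sum_congr rfl fun x _ => hfinv x
    have := h1.symm.trans h2
    linear_combination this
  -- Icc 1 (N-1) = Ico 1 N
  have hIcc : Finset.Icc 1 (N - 1) = Finset.Ico 1 N := by
    rw [← Finset.Ico_add_one_right_eq_Icc]
    congr 1
    omega
  -- sum over Icc of f(k) is zero
  have hsumIcc : ∑ k ∈ Finset.Icc 1 (N - 1), f ((k : ℕ) : ZMod N) = 0 := by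
    have hr : ∑ k ∈ Finset.range N, f ((k : ℕ) : ZMod N) = ∑ x : ZMod N, f x := by
      apply Finset.sum_nbij' (fun k => ((k : ℕ) : ZMod N)) (fun x => x.val)
      · intro a _; exact Finset.mem_univ _
      · intro x _
        exact Finset.mem_range.mpr (ZMod.val_lt x)
      · intro a ha
        exact ZMod.val_cast_of_lt (Finset.mem_range.mp ha)
      · intro x _
        exact ZMod.natCast_zmod_val x
      · intro a _; rfl
    have hsplit : ∑ k ∈ Finset.range N, f ((k : ℕ) : ZMod N)
        = f ((0 : ℕ) : ZMod N) + ∑ k ∈ Finset.Ico 1 N, f ((k : ℕ) : ZMod N) := by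
      rw [Finset.range_eq_Ico]
      exact Finset.sum_eq_sum_Ico_succ_bot (by omega) _
    have hf0 : f ((0 : ℕ) : ZMod N) = 0 := by
      rw [Nat.cast_zero, hfdef]
      exact dlog_of_not_isUnit log not_isUnit_zero
    rw [hIcc]
    have := hr.symm.trans hsplit
    rw [hsum_univ, hf0, zero_add] at this
    exact this.symm
  -- each k in Icc is a unit mod N
  have hunit : ∀ k ∈ Finset.Icc 1 (N - 1), IsUnit ((k : ℕ) : ZMod N) := by
    intro k hk
    rw [Finset.mem_Icc] at hk
    apply isUnit_iff_ne_zero.mpr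
    rw [Ne, ZMod.natCast_eq_zero_iff]
    intro h
    have := Nat.le_of_dvd (by omega) h
    omega
  -- f((N-k : ℕ)) = f(k) for k in Icc
  have hrefl : ∀ k ∈ Finset.Icc 1 (N - 1), f (((N - k : ℕ) : ℕ) : ZMod N) = f ((k : ℕ) : ZMod N) := by
    intro k hk
    rw [Finset.mem_Icc] at hk
    have hcast : (((N - k : ℕ) : ℕ) : ZMod N) = (-1 : ZMod N) * ((k : ℕ) : ZMod N) := by
      rw [Nat.cast_sub (by omega), ZMod.natCast_self]
      ring
    rw [hcast, hfdef, dlog_mul log isUnit_one.neg (hunit k (Finset.mem_Icc.mpr hk)), ← hfdef,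
      hfneg1, zero_add]
  -- T = ∑ k * f(k) = 0
  have hT : ∑ k ∈ Finset.Icc 1 (N - 1), ((k : ℕ) : ZMod (p ^ ν)) * f ((k : ℕ) : ZMod N) = 0 := by
    apply htwo
    have hre : ∑ k ∈ Finset.Icc 1 (N - 1), ((k : ℕ) : ZMod (p ^ ν)) * f ((k : ℕ) : ZMod N)
        = ∑ k ∈ Finset.Icc 1 (N - 1),
            (1 - ((k : ℕ) : ZMod (p ^ ν))) * f ((k : ℕ) : ZMod N) := by
      apply Finset.sum_nbij' (fun k => N - k) (fun k => N - k)
      · intro a ha; rw [Finset.mem_Icc] at *; omega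
      · intro a ha; rw [Finset.mem_Icc] at *; omega
      · intro a ha; rw [Finset.mem_Icc] at ha; omega
      · intro a ha; rw [Finset.mem_Icc] at ha; omega
      · intro a ha
        rw [Finset.mem_Icc] at ha
        have h1 : ((N - a : ℕ) : ZMod (p ^ ν)) = 1 - ((a : ℕ) : ZMod (p ^ ν)) := by
          rw [Nat.cast_sub (by omega), hNM]
        rw [hrefl a (Finset.mem_Icc.mpr ha), h1]
        ring
    nth_rewrite 1 [hre]
    have : ∀ k ∈ Finset.Icc 1 (N - 1),
        (1 - ((k : ℕ) : ZMod (p ^ ν))) * f ((k : ℕ) : ZMod N)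
          + ((k : ℕ) : ZMod (p ^ ν)) * f ((k : ℕ) : ZMod N) = f ((k : ℕ) : ZMod N) := by
      intro k _; ring
    rw [← Finset.sum_add_distrib, Finset.sum_congr rfl this, hsumIcc]
  -- -p is a unit mod N
  have hpN : ¬ (N ∣ p) := by
    intro h
    have := Nat.le_of_dvd (by omega) h
    have hple : p ≤ N - 1 := Nat.le_of_dvd (by omega) hdvd
    omega
  have hqunit : IsUnit (-(p : ZMod N)) := by
    apply IsUnit.neg
    apply isUnit_iff_ne_zero.mpr
    rw [Ne, ZMod.natCast_eq_zero_iff]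
    exact hpN
  -- rewrite the dlog argument
  have harg : ∀ k ∈ Finset.Icc 1 (N - 1),
      ((((N : ℤ) - (k : ℤ) * p) : ℤ) : ZMod N) = (-(p : ZMod N)) * ((k : ℕ) : ZMod N) := by
    intro k _
    push_cast [ZMod.natCast_self]
    ring
  have hfarg : ∀ k ∈ Finset.Icc 1 (N - 1),
      dlog log ((((N : ℤ) - (k : ℤ) * p) : ℤ) : ZMod N)
        = f (-(p : ZMod N)) + f ((k : ℕ) : ZMod N) := by
    intro k hk
    rw [harg k hk, hfdef]
    exact dlog_mul log hqunit (hunit k hk)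
  -- cardinality facts
  have hcard : (Finset.Icc 1 (N - 1)).card = N - 1 := by
    rw [Nat.card_Icc]; omega
  have hNm1 : ((N - 1 : ℕ) : ZMod (p ^ ν)) = 0 := hN1M
  -- sum of (f(-p) + f(k)) over Icc
  have hAdd : ∑ k ∈ Finset.Icc 1 (N - 1), (f (-(p : ZMod N)) + f ((k : ℕ) : ZMod N)) = 0 := by
    rw [Finset.sum_add_distrib, Finset.sum_const, hcard, hsumIcc,
      add_zero, nsmul_eq_mul, hNm1, zero_mul]
  -- Second sum
  have hsum2 : ∑ k ∈ Finset.Icc 1 (N - 1),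
      dlog log ((((N : ℤ) - (k : ℤ) * p) : ℤ) : ZMod N) = 0 := by
    rw [Finset.sum_congr rfl hfarg, hAdd]
  refine ⟨?_, hsum2⟩
  -- Gauss sum ≡ 0
  have hNodd : N % 2 = 1 := by
    have h2 : N % 2 ≠ 0 := by
      intro h0
      have := hN.even_iff.mp (Nat.even_iff.mpr h0)
      omega
    omega
  have h2d : 2 ∣ N - 1 := by omega
  have hgauss : ∑ k ∈ Finset.Icc 1 (N - 1), ((k : ℕ) : ZMod (p ^ ν)) = 0 := by
    rw [← Nat.cast_sum, ZMod.natCast_eq_zero_iff]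
    have hval : ∑ k ∈ Finset.Icc 1 (N - 1), k = N * (N - 1) / 2 := by
      have h1 : ∑ k ∈ Finset.range N, k = 0 + ∑ k ∈ Finset.Ico 1 N, k :=
        (Finset.range_eq_Ico N) ▸ Finset.sum_eq_sum_Ico_succ_bot (by omega) _
      have h2 := Finset.sum_range_id N
      rw [hIcc]
      omega
    rw [hval]
    have hhalf : p ^ ν ∣ (N - 1) / 2 := by
      apply Nat.Coprime.dvd_of_dvd_mul_right (hcop2.symm)
      rw [Nat.div_mul_cancel h2d]
      exact hpν
    rw [Nat.mul_div_assoc N h2d]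
    exact Dvd.dvd.mul_left hhalf N
  -- coefficients mod p^ν
  have hcoef : ∀ k ∈ Finset.Icc 1 (N - 1),
      ((((N : ℤ) - (k : ℤ) * p) : ℤ) : ZMod (p ^ ν))
        = 1 - ((k : ℕ) : ZMod (p ^ ν)) * (p : ZMod (p ^ ν)) := by
    intro k _
    push_cast [hNM]
    ring
  -- First sum
  have hexp : ∑ k ∈ Finset.Icc 1 (N - 1),
      ((((N : ℤ) - (k : ℤ) * p) : ℤ) : ZMod (p ^ ν))
        * dlog log ((((N : ℤ) - (k : ℤ) * p) : ℤ) : ZMod N)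
      = ∑ k ∈ Finset.Icc 1 (N - 1),
          ((f (-(p : ZMod N)) + f ((k : ℕ) : ZMod N))
            - ((p : ZMod (p ^ ν)) * f (-(p : ZMod N))) * ((k : ℕ) : ZMod (p ^ ν))
            - (p : ZMod (p ^ ν)) * (((k : ℕ) : ZMod (p ^ ν)) * f ((k : ℕ) : ZMod N))) := by
    refine Finset.sum_congr rfl fun k hk => ?_
    rw [hcoef k hk, hfarg k hk]
    ring
  rw [hexp, Finset.sum_sub_distrib, Finset.sum_sub_distrib, ← Finset.mul_sum, ← Finset.mul_sum,
    hAdd, hgauss, hT, mul_zero, mul_zero, sub_zero, sub_zero]
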